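/- arXiv:2308.15376 — 2 statements merged into one kernel-verified Lean document; each statement's English description precedes it below -/
import Mathlib

section
/- Let Γ be a group generated by a finite symmetric set S = S⁻¹ ⊆ Γ. For every integer n ≥ 1 such that Føl(n) < ∞, one has (1/r)·(1 − Føl(n)/γ_S(r)) ≤ 1/n for every integer r ≥ 1; that is, U_{ℕ,γ_S}(Føl(n)) ≤ 1/n. -/
open scoped Pointwise

variable {G : Type*} [Group G] [DecidableEq G]

/-- The ball of radius `r` in the word metric: elements of `G` expressible as
a product of at most `r` elements of `S`. -/
def wordBall (S : Finset G) : ℕ → Finset G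
  | 0 => {1}
  | r + 1 => wordBall S r ∪ S * wordBall S r

/-- The inner boundary of a finite set `D` with respect to the generating set `S`. -/
def innerBoundary (S D : Finset G) : Finset G :=
  D.filter fun x => ∃ s ∈ S, s * x ∉ D


/-- The Følner function of `(G,S)`: the smallest cardinality of a finite nonempty
set `D` with `n·|∂_S D| ≤ |D|`, or `∞` if no such set exists. -/
noncomputable def folner (S : Finset G) (n : ℕ) : ℕ∞ :=
  ⨅ (D : Finset G) (_ : D.Nonempty) (_ : n * (innerBoundary S D).card ≤ D.card),
    (D.card : ℕ∞)

lemma one_mem_wordBall (S : Finset G) (r : ℕ) : (1 : G) ∈ wordBall S r := by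
  induction r with
  | zero => simp [wordBall]
  | succ r ih => exact Finset.mem_union_left _ ih

/-- For every `g` in the ball of radius `r`, the set of `d ∈ D` whose translate
`g*d` leaves `D` has cardinality at most `r` times the boundary of `D`. -/
lemma filter_out_card (S D : Finset G) (r : ℕ) :
    ∀ g ∈ wordBall S r,
      (D.filter fun d => g * d ∉ D).card ≤ r * (innerBoundary S D).card := by
  induction r with
  | zero =>
    intro g hg
    simp only [wordBall, Finset.mem_singleton] at hg
    subst hg
    simp [Finset.filter_eq_empty_iff]
  | succ r ih =>
    intro g hg
    rw [wordBall, Finset.mem_union] at hg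
    rcases hg with hg | hg
    · calc (D.filter fun d => g * d ∉ D).card ≤ r * (innerBoundary S D).card := ih g hg
        _ ≤ (r + 1) * (innerBoundary S D).card := by
            exact Nat.mul_le_mul_right _ (Nat.le_succ r)
    · rw [Finset.mem_mul] at hg
      obtain ⟨s, hs, h, hh, rfl⟩ := hg
      have hsub : (D.filter fun d => s * h * d ∉ D) ⊆
          (D.filter fun d => h * d ∉ D) ∪
          (D.filter fun d => h * d ∈ D ∧ s * (h * d) ∉ D) := by
        intro d hd
        rw [Finset.mem_filter] at hd
        by_cases hhd : h * d ∈ D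
        · refine Finset.mem_union_right _ ?_
          rw [Finset.mem_filter]
          exact ⟨hd.1, hhd, by rw [← mul_assoc]; exact hd.2⟩
        · exact Finset.mem_union_left _ (Finset.mem_filter.2 ⟨hd.1, hhd⟩)
      have h2 : (D.filter fun d => h * d ∈ D ∧ s * (h * d) ∉ D).card ≤
          (innerBoundary S D).card := by
        apply Finset.card_le_card_of_injOn (fun d => h * d)
        · intro d hd
          rw [Finset.mem_coe, Finset.mem_filter] at hd
          rw [innerBoundary, Finset.mem_coe, Finset.mem_filter]
          exact ⟨hd.2.1, s, hs, hd.2.2⟩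
        · intro a _ b _ hab
          exact mul_left_cancel hab
      calc (D.filter fun d => s * h * d ∉ D).card
          ≤ ((D.filter fun d => h * d ∉ D) ∪
            (D.filter fun d => h * d ∈ D ∧ s * (h * d) ∉ D)).card :=
            Finset.card_le_card hsub
        _ ≤ (D.filter fun d => h * d ∉ D).card +
            (D.filter fun d => h * d ∈ D ∧ s * (h * d) ∉ D).card :=
            Finset.card_union_le _ _
        _ ≤ r * (innerBoundary S D).card + (innerBoundary S D).card :=
            Nat.add_le_add (ih h hh) h2
        _ = (r + 1) * (innerBoundary S D).card := by ring

/-- The key counting inequality. -/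
lemma key_count (S D : Finset G) (r : ℕ) :
    (wordBall S r).card * D.card ≤
      D.card * D.card + (wordBall S r).card * (r * (innerBoundary S D).card) := by
  have hswap : ∑ g ∈ wordBall S r, (D.filter fun d => g * d ∈ D).card ≤
      D.card * D.card := by
    have : ∑ g ∈ wordBall S r, (D.filter fun d => g * d ∈ D).card =
        ∑ d ∈ D, ((wordBall S r).filter fun g => g * d ∈ D).card := by
      simp only [Finset.card_filter]
      rw [Finset.sum_comm]
    rw [this]
    calc ∑ d ∈ D, ((wordBall S r).filter fun g => g * d ∈ D).card
        ≤ ∑ _d ∈ D, D.card := by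
          refine Finset.sum_le_sum fun d _ => ?_
          apply Finset.card_le_card_of_injOn (fun g => g * d)
          · intro g hg
            exact (Finset.mem_filter.1 hg).2
          · intro a _ b _ hab
            exact mul_right_cancel hab
      _ = D.card * D.card := by rw [Finset.sum_const, smul_eq_mul]
  have hsplit : ∀ g ∈ wordBall S r,
      D.card ≤ (D.filter fun d => g * d ∈ D).card + r * (innerBoundary S D).card := by
    intro g hg
    have := Finset.card_filter_add_card_filter_not
      (s := D) (p := fun d => g * d ∈ D)
    calc D.card = (D.filter fun d => g * d ∈ D).card +
        (D.filter fun d => ¬ (g * d ∈ D)).card := this.symm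
      _ ≤ (D.filter fun d => g * d ∈ D).card + r * (innerBoundary S D).card :=
        Nat.add_le_add_left (filter_out_card S D r g hg) _
  calc (wordBall S r).card * D.card = ∑ _g ∈ wordBall S r, D.card := by
        rw [Finset.sum_const, smul_eq_mul]
    _ ≤ ∑ g ∈ wordBall S r,
        ((D.filter fun d => g * d ∈ D).card + r * (innerBoundary S D).card) :=
        Finset.sum_le_sum hsplit
    _ = (∑ g ∈ wordBall S r, (D.filter fun d => g * d ∈ D).card) +
        (wordBall S r).card * (r * (innerBoundary S D).card) := by
        rw [Finset.sum_add_distrib, Finset.sum_const, smul_eq_mul]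
    _ ≤ D.card * D.card + (wordBall S r).card * (r * (innerBoundary S D).card) :=
        Nat.add_le_add_right hswap _

theorem stmt2 (S : Finset G)
    (hsymm : ∀ s ∈ S, s⁻¹ ∈ S) (hgen : Subgroup.closure (S : Set G) = ⊤)
    (n : ℕ) (hn : 1 ≤ n) (F : ℕ) (hF : folner S n = (F : ℕ∞)) :
    ∀ r : ℕ, 1 ≤ r →
      (1 / (r : ℝ)) * (1 - (F : ℝ) / ((wordBall S r).card : ℝ)) ≤ 1 / (n : ℝ) := by
  -- extract a Følner witness of cardinality at most `F`
  have hex : ∃ D : Finset G, D.Nonempty ∧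
      n * (innerBoundary S D).card ≤ D.card ∧ D.card ≤ F := by
    by_contra hc
    push_neg at hc
    have h2 : ((F : ℕ∞) + 1) ≤ folner S n := by
      unfold folner
      refine le_iInf fun D => le_iInf fun h1 => le_iInf fun hp => ?_
      have := hc D h1 hp
      exact_mod_cast this
    rw [hF] at h2
    have : (F : ℕ∞) < (F : ℕ∞) + 1 := by
      exact_mod_cast Nat.lt_succ_self F
    exact absurd h2 this.not_ge
  obtain ⟨D, hDne, hDfol, hDF⟩ := hex
  intro r hr
  set γ : ℕ := (wordBall S r).card with hγdef
  have hγ1 : 1 ≤ γ := Finset.card_pos.2 ⟨1, one_mem_wordBall S r⟩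
  have hc1 : 1 ≤ D.card := Finset.card_pos.2 hDne
  set B : ℕ := (innerBoundary S D).card
  set c : ℕ := D.card
  -- natural number key inequality: n*γ ≤ n*c + γ*r
  have hkeyN : n * γ ≤ n * F + γ * r := by
    have h1 : γ * c ≤ c * c + γ * (r * B) := key_count S D r
    have h2 : n * (γ * (r * B)) ≤ γ * r * c := by
      calc n * (γ * (r * B)) = γ * r * (n * B) := by ring
        _ ≤ γ * r * c := Nat.mul_le_mul_left _ hDfol
    have h3 : n * γ * c ≤ (n * c + γ * r) * c := by
      calc n * γ * c = n * (γ * c) := by ring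
        _ ≤ n * (c * c + γ * (r * B)) := Nat.mul_le_mul_left _ h1
        _ = n * c * c + n * (γ * (r * B)) := by ring
        _ ≤ n * c * c + γ * r * c := Nat.add_le_add_left h2 _
        _ = (n * c + γ * r) * c := by ring
    have h4 : n * γ ≤ n * c + γ * r :=
      Nat.le_of_mul_le_mul_right h3 hc1
    calc n * γ ≤ n * c + γ * r := h4
      _ ≤ n * F + γ * r := Nat.add_le_add_right (Nat.mul_le_mul_left _ hDF) _
  -- move to the reals
  have hγR : (0 : ℝ) < (γ : ℝ) := by exact_mod_cast hγ1
  have hrR : (0 : ℝ) < (r : ℝ) := by exact_mod_cast hr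
  have hnR : (0 : ℝ) < (n : ℝ) := by exact_mod_cast hn
  have hkeyR : (n : ℝ) * γ ≤ n * F + γ * r := by exact_mod_cast hkeyN
  have hx : (F : ℝ) / γ * γ = F := div_mul_cancel₀ _ hγR.ne'
  have h1 : (1 : ℝ) - (F : ℝ) / γ ≤ r / n := by
    rw [sub_le_iff_le_add, div_add_div _ _ hnR.ne' hγR.ne',
      le_div_iff₀ (by positivity)]
    nlinarith [hkeyR]
  calc (1 / (r : ℝ)) * (1 - (F : ℝ) / γ) ≤ (1 / (r : ℝ)) * ((r : ℝ) / n) :=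
      mul_le_mul_of_nonneg_left h1 (by positivity)
    _ = 1 / (n : ℝ) := by field_simp
end

section
/- Let Γ be a group generated by a finite symmetric set S = S⁻¹ ⊆ Γ whose growth function satisfies γ_S(n−1) ≥ C·n^d for every integer n ≥ 1, where C > 0 and d ≥ 1 are real constants. Then for every integer n ≥ 1 with Føl(n) < ∞, the Følner function satisfies Føl(n) ≥ ( C·d^d / (1+d)^{1+d} ) · n^d. -/
open scoped Pointwise

variable {G : Type*} [Group G] [DecidableEq G]

lemma mem_smul_iff' (a : G) (D : Finset G) (x : G) : x ∈ a • D ↔ a⁻¹ * x ∈ D := by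
  simp only [Finset.mem_smul_finset, smul_eq_mul]
  constructor
  · rintro ⟨y, hy, rfl⟩; simpa using hy
  · intro h; exact ⟨a⁻¹ * x, h, by group⟩

lemma sdiff_smul_subset (S D : Finset G) (hsymm : ∀ s ∈ S, s⁻¹ ∈ S)
    {s : G} (hs : s ∈ S) : D \ s • D ⊆ innerBoundary S D := by
  intro x hx
  rw [Finset.mem_sdiff] at hx
  rw [innerBoundary, Finset.mem_filter]
  exact ⟨hx.1, s⁻¹, hsymm s hs, fun h => hx.2 ((mem_smul_iff' s D x).mpr h)⟩

lemma sdiff_triangle' (A B C : Finset G) : A \ C ⊆ (A \ B) ∪ (B \ C) := by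
  intro x hx
  simp only [Finset.mem_sdiff, Finset.mem_union] at *
  tauto

lemma sdiff_card_le (S D : Finset G) (hsymm : ∀ s ∈ S, s⁻¹ ∈ S) :
    ∀ r : ℕ, ∀ g ∈ wordBall S r, (D \ g • D).card ≤ r * (innerBoundary S D).card := by
  intro r
  induction r with
  | zero =>
    intro g hg
    simp only [wordBall, Finset.mem_singleton] at hg
    subst hg
    simp
  | succ r ih =>
    intro g hg
    rw [wordBall, Finset.mem_union] at hg
    rcases hg with h | h
    · exact le_trans (ih g h) (Nat.mul_le_mul_right _ (Nat.le_succ r))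
    · obtain ⟨s, hs, h', hh, rfl⟩ := Finset.mem_mul.mp h
      have hsub : D \ (s * h') • D ⊆ (D \ s • D) ∪ (s • D \ (s * h') • D) :=
        sdiff_triangle' D (s • D) ((s * h') • D)
      have h2 : (s • D \ (s * h') • D) = s • (D \ h' • D) := by
        rw [Finset.smul_finset_sdiff, mul_smul]
      calc (D \ (s * h') • D).card
          ≤ ((D \ s • D) ∪ (s • D \ (s * h') • D)).card := Finset.card_le_card hsub
        _ ≤ (D \ s • D).card + (s • D \ (s * h') • D).card := Finset.card_union_le _ _
        _ ≤ (innerBoundary S D).card + (D \ h' • D).card := by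
            rw [h2, Finset.card_smul_finset]
            exact add_le_add_left (Finset.card_le_card (sdiff_smul_subset S D hsymm hs)) _
        _ ≤ (innerBoundary S D).card + r * (innerBoundary S D).card :=
            add_le_add_right (ih h' hh) _
        _ = (r + 1) * (innerBoundary S D).card := by ring

lemma doublecount (B D : Finset G) :
    ∑ g ∈ B, (D ∩ g • D).card ≤ D.card * D.card := by
  have h1 : ∀ g : G, (D ∩ g • D).card = (D.filter fun x => g⁻¹ * x ∈ D).card := by
    intro g
    congr 1
    ext x
    simp [Finset.mem_filter, mem_smul_iff']
  calc ∑ g ∈ B, (D ∩ g • D).card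
      = ∑ g ∈ B, ∑ x ∈ D, (if g⁻¹ * x ∈ D then 1 else 0) := by
        simp only [h1, Finset.card_filter]
    _ = ∑ x ∈ D, ∑ g ∈ B, (if g⁻¹ * x ∈ D then 1 else 0) := Finset.sum_comm
    _ = ∑ x ∈ D, (B.filter fun g => g⁻¹ * x ∈ D).card := by
        simp only [Finset.card_filter]
    _ ≤ ∑ x ∈ D, D.card := by
        apply Finset.sum_le_sum
        intro x _
        apply Finset.card_le_card_of_injOn (fun g => g⁻¹ * x)
        · intro g hg
          exact (Finset.mem_filter.mp hg).2
        · intro g _ h _ hgh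
          simpa using mul_right_cancel hgh
    _ = D.card * D.card := by rw [Finset.sum_const, smul_eq_mul]

lemma main_count (S D : Finset G) (hsymm : ∀ s ∈ S, s⁻¹ ∈ S) (r : ℕ) :
    (wordBall S r).card * D.card ≤
      D.card * D.card + (wordBall S r).card * (r * (innerBoundary S D).card) := by
  calc (wordBall S r).card * D.card
      = ∑ _g ∈ wordBall S r, D.card := by rw [Finset.sum_const, smul_eq_mul]
    _ = ∑ g ∈ wordBall S r, ((D ∩ g • D).card + (D \ g • D).card) :=
        Finset.sum_congr rfl fun g _ => (Finset.card_inter_add_card_sdiff D (g • D)).symm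
    _ = (∑ g ∈ wordBall S r, (D ∩ g • D).card) + ∑ g ∈ wordBall S r, (D \ g • D).card :=
        Finset.sum_add_distrib
    _ ≤ D.card * D.card + (wordBall S r).card * (r * (innerBoundary S D).card) := by
        apply add_le_add (doublecount _ _)
        calc ∑ g ∈ wordBall S r, (D \ g • D).card
            ≤ ∑ _g ∈ wordBall S r, r * (innerBoundary S D).card :=
              Finset.sum_le_sum (sdiff_card_le S D hsymm r)
          _ = (wordBall S r).card * (r * (innerBoundary S D).card) := by
              rw [Finset.sum_const, smul_eq_mul]

theorem stmt10 (S : Finset G)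
    (hsymm : ∀ s ∈ S, s⁻¹ ∈ S) (hgen : Subgroup.closure (S : Set G) = ⊤)
    (C d : ℝ) (hC : 0 < C) (hd : 1 ≤ d)
    (hgrowth : ∀ n : ℕ, 1 ≤ n → C * (n : ℝ) ^ d ≤ ((wordBall S (n - 1)).card : ℝ))
    (n : ℕ) (hn : 1 ≤ n) (F : ℕ) (hF : folner S n = (F : ℕ∞)) :
    C * d ^ d / (1 + d) ^ (1 + d) * (n : ℝ) ^ d ≤ (F : ℝ) := by
  -- extract a witness D with card D ≤ F
  have hlt : folner S n < (F : ℕ∞) + 1 := by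
    rw [hF]
    exact_mod_cast ENat.coe_lt_coe.mpr (Nat.lt_succ_self F)
  rw [folner] at hlt
  simp only [iInf_lt_iff] at hlt
  obtain ⟨D, hDne, hDfol, hDcard⟩ := hlt
  have hDF : D.card ≤ F := by
    have : (D.card : ℕ∞) < ((F + 1 : ℕ) : ℕ∞) := by exact_mod_cast hDcard
    exact Nat.lt_succ_iff.mp (ENat.coe_lt_coe.mp this)
  -- basic positivity
  have hd0 : (0:ℝ) < d := lt_of_lt_of_le one_pos hd
  have h1d : (0:ℝ) < 1 + d := by linarith
  have hn' : (0:ℝ) < (n:ℝ) := by exact_mod_cast hn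
  set t : ℝ := d * n / (1 + d) with ht_def
  have ht : 0 < t := by positivity
  set m : ℕ := ⌈t⌉₊ with hm_def
  have hm1 : 1 ≤ m := Nat.ceil_pos.mpr ht
  have htm : t ≤ (m:ℝ) := Nat.le_ceil t
  have hmt : (m:ℝ) < t + 1 := Nat.ceil_lt_add_one ht.le
  have htn : t ≤ (n:ℝ) := by
    rw [ht_def, div_le_iff₀ h1d]
    nlinarith
  have hmn : m ≤ n := Nat.ceil_le.mpr htn
  set r : ℕ := m - 1 with hr_def
  have hrn : r ≤ n := le_trans (Nat.sub_le m 1) hmn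
  have hrR : (r:ℝ) = (m:ℝ) - 1 := by
    rw [hr_def, Nat.cast_sub hm1, Nat.cast_one]
  -- the combinatorial inequality
  set a : ℕ := D.card with ha_def
  set b : ℕ := (wordBall S r).card with hb_def
  set e : ℕ := (innerBoundary S D).card with he_def
  have ha1 : 1 ≤ a := Finset.card_pos.mpr hDne
  have hcount : b * a ≤ a * a + b * (r * e) := main_count S D hsymm r
  have hkey : b * (n - r) ≤ a * n := by
    have h2 : b * n ≤ a * n + b * r := by
      have step : (b * n) * a ≤ (a * n + b * r) * a := by
        calc (b * n) * a = (b * a) * n := by ring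
          _ ≤ (a * a + b * (r * e)) * n := Nat.mul_le_mul_right n hcount
          _ = a * (a * n) + (b * r) * (n * e) := by ring
          _ ≤ a * (a * n) + (b * r) * a := by
              exact add_le_add_right (Nat.mul_le_mul_left _ hDfol) _
          _ = (a * n + b * r) * a := by ring
      exact Nat.le_of_mul_le_mul_right step (lt_of_lt_of_le one_pos ha1)
    have e1 : b * (n - r) + b * r = b * n := by
      rw [← Nat.mul_add, Nat.sub_add_cancel hrn]
    omega
  -- cast to reals
  have hkeyR : (b:ℝ) * ((n:ℝ) - (r:ℝ)) ≤ (a:ℝ) * (n:ℝ) := by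
    have := (Nat.cast_le (α := ℝ)).mpr hkey
    push_cast [Nat.cast_sub hrn] at this
    convert this using 2 <;> push_cast <;> ring
  -- growth lower bound
  have hb : C * (m:ℝ) ^ d ≤ (b:ℝ) := by
    have := hgrowth m hm1
    rwa [← hr_def] at this
  -- the real chain
  have hnt : (n:ℝ) - t = (n:ℝ) / (1 + d) := by
    rw [ht_def]
    field_simp
    ring
  have hnr : (n:ℝ) / (1 + d) ≤ (n:ℝ) - (r:ℝ) := by
    rw [← hnt, hrR]
    linarith
  have hnr0 : (0:ℝ) ≤ (n:ℝ) - (r:ℝ) := le_trans (by positivity) hnr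
  have htd : t ^ d ≤ (m:ℝ) ^ d := Real.rpow_le_rpow ht.le htm hd0.le
  have chain : C * t ^ d * ((n:ℝ) / (1 + d)) ≤ (F:ℝ) * (n:ℝ) := by
    calc C * t ^ d * ((n:ℝ) / (1 + d))
        ≤ C * (m:ℝ) ^ d * ((n:ℝ) - (r:ℝ)) := by
          apply mul_le_mul (by nlinarith [Real.rpow_nonneg ht.le d]) hnr (by positivity)
          positivity
      _ ≤ (b:ℝ) * ((n:ℝ) - (r:ℝ)) := mul_le_mul_of_nonneg_right hb hnr0
      _ ≤ (a:ℝ) * (n:ℝ) := hkeyR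
      _ ≤ (F:ℝ) * (n:ℝ) := by
          apply mul_le_mul_of_nonneg_right _ hn'.le
          exact_mod_cast hDF
  -- rewrite LHS
  have hEq : C * d ^ d / (1 + d) ^ (1 + d) * (n:ℝ) ^ d = C * t ^ d / (1 + d) := by
    rw [ht_def, Real.div_rpow (by positivity) h1d.le,
      Real.mul_rpow hd0.le (Nat.cast_nonneg n), Real.rpow_add h1d, Real.rpow_one]
    have h1 : ((1:ℝ) + d) ^ d ≠ 0 := by positivity
    field_simp
  rw [hEq, div_le_iff₀ h1d]
  have h3 := mul_le_mul_of_nonneg_right chain h1d.le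
  have h4 : C * t ^ d * ((n:ℝ) / (1 + d)) * (1 + d) = C * t ^ d * (n:ℝ) := by
    field_simp
  rw [h4] at h3
  have h5 : (C * t ^ d) * (n:ℝ) ≤ ((F:ℝ) * (1 + d)) * (n:ℝ) := by linarith
  exact le_of_mul_le_mul_right h5 hn'
end
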